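/- arXiv:1902.05059 — 2 statements merged into one kernel-verified Lean document; each statement's English description precedes it below -/
import Mathlib

section
/- All solutions ω ∈ ℂ of the TM slab resonance equation e^{2 i n₁ ω a} = −(n₁+1)/(n₁−1), with a > 0 and n₁ > 1 real, have imaginary part equal to −Log((n₁+1)/(n₁−1))/(2 n₁ a), which is strictly negative; in particular every resonance lies in the open lower half-plane. -/
/-- All TM slab resonances have Im ω = −log μ/(2 n₁ a) < 0, hence lie in the lower half-plane. -/
theorem stmt_3 (a n₁ : ℝ) (ha : 0 < a) (hn : 1 < n₁) (ω : ℂ)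
    (hres : Complex.exp (2 * Complex.I * (n₁ : ℂ) * ω * (a : ℂ))
      = -(((n₁ : ℂ) + 1) / ((n₁ : ℂ) - 1))) :
    ω.im = -Real.log ((n₁ + 1) / (n₁ - 1)) / (2 * n₁ * a) ∧ ω.im < 0 := by
  set μ : ℝ := (n₁ + 1) / (n₁ - 1) with hμ
  have hμ1 : 1 < μ := by
    rw [hμ, lt_div_iff₀ (by linarith)]
    linarith
  have hμ0 : 0 < μ := by linarith
  have hcast : (((n₁ : ℂ) + 1) / ((n₁ : ℂ) - 1)) = (μ : ℂ) := by
    rw [hμ]; push_cast; ring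
  have habs : ‖Complex.exp (2 * Complex.I * (n₁ : ℂ) * ω * (a : ℂ))‖ = μ := by
    rw [hres, hcast, norm_neg, Complex.norm_real, Real.norm_eq_abs, abs_of_pos hμ0]
  rw [Complex.norm_exp] at habs
  have hre : (2 * Complex.I * (n₁ : ℂ) * ω * (a : ℂ)).re = -(2 * n₁ * a * ω.im) := by
    simp [Complex.mul_re, Complex.mul_im]; ring
  rw [hre] at habs
  have hlog : -(2 * n₁ * a * ω.im) = Real.log μ := by
    have := Real.exp_log hμ0
    exact Real.exp_injective (by rw [habs, this])
  have hden : (2 : ℝ) * n₁ * a ≠ 0 := by positivity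
  constructor
  · field_simp
    linarith [hlog]
  · have hlogpos : 0 < Real.log μ := Real.log_pos hμ1
    nlinarith [mul_pos (mul_pos (by norm_num : (0:ℝ) < 2) (by linarith : (0:ℝ) < n₁)) ha]
end

section
/- The function f(w) = ((1−w)/(1+w))·e^{2w} satisfies |f(w)| < 1 for all real w with 0 < w ≤ 1. -/
/-- The contraction f(w) = ((1−w)/(1+w)) e^{2w} satisfies |f(w)| < 1 for 0 < w ≤ 1. -/
theorem stmt_7 (w : ℝ) (h0 : 0 < w) (h1 : w ≤ 1) :
    |((1 - w) / (1 + w)) * Real.exp (2 * w)| < 1 := by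
  have hw1 : (0:ℝ) ≤ 1 - w := by linarith
  have hw2 : (0:ℝ) < 1 + w := by linarith
  have hexp : (0:ℝ) < Real.exp (2 * w) := Real.exp_pos _
  rw [abs_of_nonneg (by positivity)]
  -- bound exp w by degree-3 Taylor + remainder
  have habs : |w| ≤ 1 := by rw [abs_of_pos h0]; exact h1
  have hb := Real.exp_bound habs (by norm_num : 0 < 4)
  have hsum : ∑ i ∈ Finset.range 4, w ^ i / (Nat.factorial i) =
      1 + w + w ^ 2 / 2 + w ^ 3 / 6 := by
    simp [Finset.sum_range_succ, Nat.factorial]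
  rw [hsum] at hb
  have hU : Real.exp w ≤ 1 + w + w ^ 2 / 2 + w ^ 3 / 6 + 5 / 96 * w ^ 4 := by
    have h := (abs_le.mp hb).2
    have : |w| ^ 4 = w ^ 4 := by rw [abs_of_pos h0]
    rw [this] at h
    norm_num [Nat.factorial] at h
    linarith
  have hepos : (0:ℝ) < Real.exp w := Real.exp_pos _
  have h2w : Real.exp (2 * w) = Real.exp w * Real.exp w := by
    rw [← Real.exp_add]; ring_nf
  rw [div_mul_eq_mul_div, div_lt_one hw2, h2w]
  set U := 1 + w + w ^ 2 / 2 + w ^ 3 / 6 + 5 / 96 * w ^ 4 with hUdef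
  have hUU : Real.exp w * Real.exp w ≤ U * U :=
    mul_le_mul hU hU hepos.le (by positivity)
  have hmono : (1 - w) * (Real.exp w * Real.exp w) ≤ (1 - w) * (U * U) :=
    mul_le_mul_of_nonneg_left hUU hw1
  have hpoly : (1 - w) * (U * U) < 1 + w := by
    rw [hUdef]
    nlinarith [pow_pos h0 3, pow_pos h0 4, pow_pos h0 5, pow_pos h0 6,
      pow_pos h0 7, pow_pos h0 8, pow_pos h0 9]
  linarith
end
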